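/- For any nonempty compact set E ⊆ ℝ^d and θ ∈ (0,1), the real interpolation space (C(E), C^{0,1}(E))_{θ,∞} equals the Hölder space C^{0,θ}(E), with equivalent norms. -/

import Mathlib

open scoped ENNReal

noncomputable section

/-- Sup-norm (of `C(E)`), extended-real valued. -/
def supN {E : Type*} (f : E → ℝ) : ℝ≥0∞ := ⨆ x, ENNReal.ofReal |f x|

/-- `α`-Hölder seminorm `sup_{x ≠ y} |f x - f y| / dist x y ^ α`. -/
def holderSemi {E : Type*} [PseudoMetricSpace E] (α : ℝ) (f : E → ℝ) : ℝ≥0∞ :=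
  ⨆ x, ⨆ y, ⨆ _ : x ≠ y, ENNReal.ofReal (|f x - f y| / dist x y ^ α)

/-- Norm of the Hölder space `C^{0,α}(E)`. -/
def holderNorm {E : Type*} [PseudoMetricSpace E] (α : ℝ) (f : E → ℝ) : ℝ≥0∞ :=
  supN f + holderSemi α f

/-- K-functional of the couple `(C(E), C^{0,1}(E))`. -/
def Kfun {E : Type*} [PseudoMetricSpace E] (t : ℝ≥0∞) (f : E → ℝ) : ℝ≥0∞ :=
  ⨅ g : E → ℝ, ⨅ h : E → ℝ, ⨅ _ : f = g + h ∧ Continuous g,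
    supN g + t * holderNorm 1 h

/-- Norm of the real interpolation space `(C(E), C^{0,1}(E))_{θ,∞}`
(discretized K-method, `sup_{k ∈ ℤ} 2^{-kθ} K(2^k, f)`). -/
def realInterpInftyNorm {E : Type*} [PseudoMetricSpace E] (θ : ℝ) (f : E → ℝ) : ℝ≥0∞ :=
  ⨆ k : ℤ, ((2 : ℝ≥0∞) ^ k) ^ (-θ) * Kfun ((2 : ℝ≥0∞) ^ k) f

set_option linter.unusedSectionVars false
set_option maxHeartbeats 1000000

section Helpers
variable {E : Type*} [MetricSpace E]

lemma ofReal_abs_le_supN (f : E → ℝ) (x : E) : ENNReal.ofReal |f x| ≤ supN f :=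
  le_iSup (fun x => ENNReal.ofReal |f x|) x

lemma le_Kfun {f : E → ℝ} {t X : ℝ≥0∞}
    (H : ∀ g h : E → ℝ, f = g + h → Continuous g → X ≤ supN g + t * holderNorm 1 h) :
    X ≤ Kfun t f :=
  le_iInf fun g => le_iInf fun h => le_iInf fun hp => H g h hp.1 hp.2

lemma term_le_realInterp (θ : ℝ) (f : E → ℝ) (k : ℤ) :
    ((2 : ℝ≥0∞) ^ k) ^ (-θ) * Kfun ((2 : ℝ≥0∞) ^ k) f ≤ realInterpInftyNorm θ f :=
  le_iSup (fun k : ℤ => ((2 : ℝ≥0∞) ^ k) ^ (-θ) * Kfun ((2 : ℝ≥0∞) ^ k) f) k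

lemma two_zpow_eq (k : ℤ) : (2 : ℝ≥0∞) ^ k = ENNReal.ofReal ((2:ℝ) ^ (k:ℝ)) := by
  rw [← ENNReal.rpow_intCast]
  rw [(ENNReal.ofReal_rpow_of_pos (by norm_num : (0:ℝ) < 2)).symm]
  norm_num

lemma holderSemi_le_realInterp {θ : ℝ} (hθ0 : 0 < θ) (hθ1 : θ < 1) (f : E → ℝ) :
    holderSemi θ f ≤ 4 * realInterpInftyNorm θ f := by
  refine iSup_le fun x => iSup_le fun y => iSup_le fun hxy => ?_
  set dxy : ℝ := dist x y with hdxy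
  have hd : 0 < dxy := dist_pos.mpr hxy
  set k : ℤ := ⌈Real.logb 2 dxy⌉ with hk
  set τ : ℝ := (2:ℝ) ^ (k:ℝ) with hτ
  have hτpos : 0 < τ := Real.rpow_pos_of_pos (by norm_num) _
  have hlogb : (2:ℝ) ^ (Real.logb 2 dxy) = dxy := Real.rpow_logb (by norm_num) (by norm_num) hd
  have hdτ : dxy ≤ τ := by
    rw [← hlogb]
    exact Real.rpow_le_rpow_of_exponent_le one_le_two (Int.le_ceil _)
  have hτ2d : τ ≤ 2 * dxy := by
    have h1 : (k:ℝ) ≤ Real.logb 2 dxy + 1 := by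
      have := Int.ceil_lt_add_one (Real.logb 2 dxy)
      exact_mod_cast this.le
    calc τ ≤ (2:ℝ) ^ (Real.logb 2 dxy + 1) := Real.rpow_le_rpow_of_exponent_le one_le_two h1
      _ = dxy * 2 := by rw [Real.rpow_add (by norm_num), hlogb, Real.rpow_one]
      _ = 2 * dxy := mul_comm _ _
  set t : ℝ≥0∞ := (2:ℝ≥0∞) ^ k with ht
  have htofReal : t = ENNReal.ofReal τ := two_zpow_eq k
  set N : ℝ≥0∞ := ENNReal.ofReal |f x - f y| with hN
  set K : ℝ≥0∞ := Kfun t f with hK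
  -- Step 1 : N ≤ 2 * K
  have step1 : N ≤ 2 * K := by
    have half : N / 2 ≤ K := by
      refine le_Kfun fun g h hfgh hg => ?_
      set A := supN g with hA
      set B := holderNorm 1 h with hB
      have habs : |f x - f y| ≤ |g x| + |g y| + |h x - h y| := by
        have : f x - f y = (g x - g y) + (h x - h y) := by rw [hfgh]; simp [Pi.add_apply]; ring
        rw [this]
        calc |g x - g y + (h x - h y)| ≤ |g x - g y| + |h x - h y| := abs_add_le _ _
          _ ≤ (|g x| + |g y|) + |h x - h y| := by gcongr; exact abs_sub _ _
      have hh : ENNReal.ofReal |h x - h y| ≤ t * B := by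
        rcases eq_or_ne (h x) (h y) with he | he
        · simp [he]
        · have hrw : |h x - h y| = dxy * (|h x - h y| / dxy ^ (1:ℝ)) := by
            rw [Real.rpow_one]
            field_simp
          rw [hrw, ENNReal.ofReal_mul hd.le]
          have h1 : ENNReal.ofReal (|h x - h y| / dxy ^ (1:ℝ)) ≤ holderSemi 1 h := by
            refine le_trans ?_ (le_iSup _ x)
            refine le_trans ?_ (le_iSup _ y)
            exact le_iSup (fun _ : x ≠ y => ENNReal.ofReal (|h x - h y| / dist x y ^ (1:ℝ))) hxy
          have h2 : ENNReal.ofReal dxy ≤ t := by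
            rw [htofReal]; exact ENNReal.ofReal_le_ofReal hdτ
          calc ENNReal.ofReal dxy * ENNReal.ofReal (|h x - h y| / dxy ^ (1:ℝ))
              ≤ t * holderSemi 1 h := mul_le_mul' h2 h1
            _ ≤ t * B := by rw [hB, holderNorm]; exact mul_le_mul' le_rfl le_add_self
      have hNle : N ≤ 2 * (A + t * B) := by
        calc N ≤ ENNReal.ofReal (|g x| + |g y| + |h x - h y|) := ENNReal.ofReal_le_ofReal habs
          _ = ENNReal.ofReal |g x| + ENNReal.ofReal |g y| + ENNReal.ofReal |h x - h y| := by
              rw [ENNReal.ofReal_add (by positivity) (abs_nonneg _),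
                ENNReal.ofReal_add (abs_nonneg _) (abs_nonneg _)]
          _ ≤ A + A + t * B := by
              gcongr
              · exact ofReal_abs_le_supN g x
              · exact ofReal_abs_le_supN g y
          _ = A + (A + t * B) := by ring
          _ ≤ (A + t * B) + (A + t * B) := add_le_add le_self_add le_rfl
          _ = 2 * (A + t * B) := (two_mul _).symm
      rw [ENNReal.div_le_iff_le_mul (Or.inl two_ne_zero) (Or.inl ENNReal.ofNat_ne_top)]
      calc N ≤ 2 * (A + t * B) := hNle
        _ = (A + t * B) * 2 := mul_comm _ _
    calc N = 2 * (N / 2) := (ENNReal.mul_div_cancel two_ne_zero ENNReal.ofNat_ne_top).symm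
      _ ≤ 2 * K := mul_le_mul' le_rfl half
  -- Step 2 : the denominators
  set D : ℝ≥0∞ := ENNReal.ofReal (dxy ^ θ) with hD
  have hDpos : D ≠ 0 := by
    simp only [hD, ne_eq, ENNReal.ofReal_eq_zero, not_le]
    positivity
  have htθ : t ^ θ ≤ 2 * D := by
    rw [htofReal, ENNReal.ofReal_rpow_of_pos hτpos]
    have : τ ^ θ ≤ 2 * dxy ^ θ := by
      calc τ ^ θ ≤ (2 * dxy) ^ θ := Real.rpow_le_rpow hτpos.le hτ2d hθ0.le
        _ = 2 ^ θ * dxy ^ θ := Real.mul_rpow (by norm_num) hd.le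
        _ ≤ 2 * dxy ^ θ := by
            have h2θ : (2:ℝ) ^ θ ≤ 2 := by
              calc (2:ℝ) ^ θ ≤ (2:ℝ) ^ (1:ℝ) :=
                    Real.rpow_le_rpow_of_exponent_le one_le_two hθ1.le
                _ = 2 := Real.rpow_one 2
            exact mul_le_mul_of_nonneg_right h2θ (by positivity)
    calc ENNReal.ofReal (τ ^ θ) ≤ ENNReal.ofReal (2 * dxy ^ θ) := ENNReal.ofReal_le_ofReal this
      _ = 2 * D := by rw [ENNReal.ofReal_mul (by norm_num)]; norm_num [hD]
  -- final computation
  have hgoal : ENNReal.ofReal (|f x - f y| / dxy ^ θ) = N / D := by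
    rw [hN, hD, ENNReal.ofReal_div_of_pos (by positivity)]
  rw [hgoal]
  have h1 : N / D ≤ 2 * K / D := ENNReal.div_le_div_right step1 D
  have h4 : (4:ℝ≥0∞) * (2*D)⁻¹ = 2 * D⁻¹ := by
    rw [ENNReal.mul_inv (Or.inl two_ne_zero) (Or.inl ENNReal.ofNat_ne_top),
        show (4:ℝ≥0∞) = 2*2 by norm_num]
    calc 2*2*(2⁻¹*D⁻¹) = 2*(2*2⁻¹)*D⁻¹ := by ring
      _ = 2*D⁻¹ := by rw [ENNReal.mul_inv_cancel two_ne_zero ENNReal.ofNat_ne_top]; ring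
  have h2 : 2 * K / D = 4 * (K / (2 * D)) := by
    calc 2*K/D = K * (2*D⁻¹) := by rw [div_eq_mul_inv]; ring
      _ = K * (4*(2*D)⁻¹) := by rw [h4]
      _ = 4*(K/(2*D)) := by rw [div_eq_mul_inv]; ring
  have h3 : K / (2*D) ≤ K / (t ^ θ) := ENNReal.div_le_div_left htθ K
  have h5 : K / t ^ θ = t ^ (-θ) * K := by
    rw [ENNReal.rpow_neg, div_eq_mul_inv, mul_comm]
  calc N / D ≤ 2 * K / D := h1
    _ = 4 * (K / (2 * D)) := h2
    _ ≤ 4 * (K / t ^ θ) := mul_le_mul' le_rfl h3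
    _ = 4 * (t ^ (-θ) * K) := by rw [h5]
    _ ≤ 4 * realInterpInftyNorm θ f := mul_le_mul' le_rfl (term_le_realInterp θ f k)
lemma Kfun_le {f g h : E → ℝ} (hfgh : f = g + h) (hg : Continuous g) (t : ℝ≥0∞) :
    Kfun t f ≤ supN g + t * holderNorm 1 h := by
  refine le_trans (iInf_le _ g) ?_
  refine le_trans (iInf_le _ h) ?_
  exact iInf_le _ ⟨hfgh, hg⟩

lemma holderNorm_zero (α : ℝ) : holderNorm α (0 : E → ℝ) = 0 := by
  simp [holderNorm, holderSemi, supN]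

lemma realInterp_le_holderNorm [Nonempty E] {θ : ℝ} (hθ0 : 0 < θ) (hθ1 : θ < 1)
    (f : E → ℝ) (hf : Continuous f) :
    realInterpInftyNorm θ f ≤ 2 * holderNorm θ f := by
  by_cases htop : holderNorm θ f = ⊤
  · rw [htop, ENNReal.mul_top (by norm_num)]; exact le_top
  have hsup_ne : supN f ≠ ⊤ := by
    intro hc; exact htop (by rw [holderNorm, hc, top_add])
  have hsemi_ne : holderSemi θ f ≠ ⊤ := by
    intro hc; exact htop (by rw [holderNorm, hc, add_top])
  set M : ℝ := (supN f).toReal with hMdef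
  set H : ℝ := (holderSemi θ f).toReal with hHdef
  have hM0 : 0 ≤ M := ENNReal.toReal_nonneg
  have hH0 : 0 ≤ H := ENNReal.toReal_nonneg
  have hsupN_eq : supN f = ENNReal.ofReal M := (ENNReal.ofReal_toReal hsup_ne).symm
  have hsemi_eq : holderSemi θ f = ENNReal.ofReal H := (ENNReal.ofReal_toReal hsemi_ne).symm
  have hM : ∀ x, |f x| ≤ M := by
    intro x
    have := (ofReal_abs_le_supN f x).trans_eq hsupN_eq
    exact (ENNReal.ofReal_le_ofReal_iff hM0).mp this
  have hH : ∀ x y : E, |f x - f y| ≤ H * dist x y ^ θ := by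
    intro x y
    rcases eq_or_ne x y with rfl | hxy
    · simp [Real.zero_rpow hθ0.ne']
    · have hd : 0 < dist x y := dist_pos.mpr hxy
      have h1 : ENNReal.ofReal (|f x - f y| / dist x y ^ θ) ≤ holderSemi θ f := by
        refine le_trans ?_ (le_iSup _ x)
        refine le_trans ?_ (le_iSup _ y)
        exact le_iSup (fun _ : x ≠ y => ENNReal.ofReal (|f x - f y| / dist x y ^ θ)) hxy
      rw [hsemi_eq] at h1
      have h2 : |f x - f y| / dist x y ^ θ ≤ H := (ENNReal.ofReal_le_ofReal_iff hH0).mp h1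
      calc |f x - f y| = |f x - f y| / dist x y ^ θ * dist x y ^ θ := by
            field_simp
        _ ≤ H * dist x y ^ θ := by
            exact mul_le_mul_of_nonneg_right h2 (by positivity)
  have hNorm_eq : holderNorm θ f = ENNReal.ofReal M + ENNReal.ofReal H := by
    rw [holderNorm, hsupN_eq, hsemi_eq]
  refine iSup_le fun k => ?_
  rcases le_or_gt 0 k with hk | hk
  · -- easy case : t ≥ 1, decompose f = f + 0
    set t : ℝ≥0∞ := (2:ℝ≥0∞) ^ k with ht
    have ht1 : 1 ≤ t := by
      rw [ht, ← ENNReal.rpow_intCast]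
      calc (1:ℝ≥0∞) = 2 ^ (0:ℝ) := by simp
        _ ≤ 2 ^ (k:ℝ) := ENNReal.rpow_le_rpow_of_exponent_le one_le_two (by exact_mod_cast hk)
    have hK : Kfun t f ≤ supN f := by
      have := Kfun_le (f := f) (g := f) (h := 0) (by simp) hf t
      simpa [holderNorm_zero] using this
    have htneg : t ^ (-θ) ≤ 1 := by
      calc t ^ (-θ) ≤ t ^ (0:ℝ) :=
            ENNReal.rpow_le_rpow_of_exponent_le ht1 (by linarith)
        _ = 1 := by simp
    calc t ^ (-θ) * Kfun t f ≤ 1 * supN f := mul_le_mul' htneg hK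
      _ = supN f := one_mul _
      _ ≤ holderNorm θ f := le_self_add
      _ ≤ 2 * holderNorm θ f := le_mul_of_one_le_left zero_le one_le_two
  · -- main case : t < 1, McShane approximation
    set τ : ℝ := (2:ℝ) ^ (k:ℝ) with hτdef
    have hτpos : 0 < τ := Real.rpow_pos_of_pos (by norm_num) _
    have hτ1 : τ ≤ 1 := by
      apply Real.rpow_le_one_of_one_le_of_nonpos one_le_two
      exact_mod_cast hk.le
    set L : ℝ := H * τ ^ (θ - 1) with hLdef
    have hL0 : 0 ≤ L := by positivity
    set h : E → ℝ := fun x => ⨅ y : E, (f y + L * dist x y) with hhdef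
    have hbdd : ∀ x : E, BddBelow (Set.range fun y : E => f y + L * dist x y) := by
      intro x
      refine ⟨-M, ?_⟩
      rintro _ ⟨y, rfl⟩
      show -M ≤ f y + L * dist x y
      have h1 : -M ≤ f y := (abs_le.mp (hM y)).1
      have h2 : 0 ≤ L * dist x y := mul_nonneg hL0 dist_nonneg
      linarith
    have hle : ∀ x, h x ≤ f x := fun x => by
      simpa [dist_self] using ciInf_le (hbdd x) x
    have hge : ∀ x, -M ≤ h x := fun x => by
      refine le_ciInf fun y => ?_
      show -M ≤ f y + L * dist x y
      have h1 : -M ≤ f y := (abs_le.mp (hM y)).1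
      have h2 : 0 ≤ L * dist x y := mul_nonneg hL0 dist_nonneg
      linarith
    have hlip : ∀ x x' : E, h x ≤ h x' + L * dist x x' := by
      intro x x'
      rw [← sub_le_iff_le_add]
      refine le_ciInf fun y => ?_
      have h1 : h x ≤ f y + L * dist x y := ciInf_le (hbdd x) y
      have h2 : dist x y ≤ dist x x' + dist x' y := dist_triangle _ _ _
      have h3 := mul_le_mul_of_nonneg_left h2 hL0
      linarith
    have habs : ∀ x x' : E, |h x - h x'| ≤ L * dist x x' := by
      intro x x'
      rw [abs_sub_le_iff]
      constructor
      · linarith [hlip x x']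
      · have := hlip x' x
        rw [dist_comm x' x] at this
        linarith
    have hgap : ∀ x, f x - h x ≤ H * τ ^ θ := by
      intro x
      rw [sub_le_iff_le_add, add_comm, ← sub_le_iff_le_add]
      refine le_ciInf fun y => ?_
      have key : H * dist x y ^ θ ≤ H * τ ^ θ + L * dist x y := by
        rcases le_or_gt (dist x y) τ with hc | hc
        · have : dist x y ^ θ ≤ τ ^ θ := Real.rpow_le_rpow dist_nonneg hc hθ0.le
          have h2 : 0 ≤ L * dist x y := mul_nonneg hL0 dist_nonneg
          nlinarith
        · have hdpos : 0 < dist x y := hτpos.trans hc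
          have e1 : dist x y ^ θ = dist x y ^ (θ - 1) * dist x y := by
            conv_lhs => rw [show θ = θ - 1 + 1 from by ring]
            rw [Real.rpow_add hdpos, Real.rpow_one]
          have e2 : dist x y ^ (θ - 1) ≤ τ ^ (θ - 1) :=
            Real.rpow_le_rpow_of_nonpos hτpos hc.le (by linarith)
          have e3 : H * dist x y ^ θ ≤ L * dist x y := by
            rw [e1, hLdef]
            calc H * (dist x y ^ (θ - 1) * dist x y)
                = H * dist x y ^ (θ - 1) * dist x y := by ring
              _ ≤ H * τ ^ (θ - 1) * dist x y := by
                  apply mul_le_mul_of_nonneg_right _ hdpos.le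
                  exact mul_le_mul_of_nonneg_left e2 hH0
          have : 0 ≤ H * τ ^ θ := by positivity
          linarith
      have h1 : f x - f y ≤ H * dist x y ^ θ := (le_abs_self _).trans (hH x y)
      linarith
    have hpos : ∀ x, 0 ≤ f x - h x := fun x => by linarith [hle x]
    set g : E → ℝ := fun x => f x - h x with hgdef
    have hfgh : f = g + h := by funext x; simp [hgdef]
    have hcont_h : Continuous h := by
      have : LipschitzWith L.toNNReal h := by
        apply LipschitzWith.of_dist_le_mul
        intro x x'
        rw [Real.dist_eq, Real.coe_toNNReal L hL0]
        exact habs x x'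
      exact this.continuous
    have hcont_g : Continuous g := hf.sub hcont_h
    have hsupg : supN g ≤ ENNReal.ofReal (H * τ ^ θ) := by
      refine iSup_le fun x => ?_
      rw [show |g x| = f x - h x from abs_of_nonneg (hpos x)]
      exact ENNReal.ofReal_le_ofReal (hgap x)
    have hNh : holderNorm 1 h ≤ ENNReal.ofReal (M + L) := by
      have hsh : supN h ≤ ENNReal.ofReal M := by
        refine iSup_le fun x => ?_
        apply ENNReal.ofReal_le_ofReal
        rw [abs_le]
        exact ⟨hge x, (hle x).trans ((le_abs_self _).trans (hM x))⟩
      have hss : holderSemi 1 h ≤ ENNReal.ofReal L := by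
        refine iSup_le fun x => iSup_le fun y => iSup_le fun hxy => ?_
        apply ENNReal.ofReal_le_ofReal
        rw [Real.rpow_one, div_le_iff₀ (dist_pos.mpr hxy)]
        exact habs x y
      calc holderNorm 1 h = supN h + holderSemi 1 h := rfl
        _ ≤ ENNReal.ofReal M + ENNReal.ofReal L := add_le_add hsh hss
        _ = ENNReal.ofReal (M + L) := (ENNReal.ofReal_add hM0 hL0).symm
    set t : ℝ≥0∞ := (2:ℝ≥0∞) ^ k with htdef
    have htofReal : t = ENNReal.ofReal τ := two_zpow_eq k
    have hK : Kfun t f ≤ ENNReal.ofReal (H * τ ^ θ) + t * ENNReal.ofReal (M + L) := by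
      refine (Kfun_le hfgh hcont_g t).trans ?_
      exact add_le_add hsupg (mul_le_mul' le_rfl hNh)
    have htneg : t ^ (-θ) = ENNReal.ofReal (τ ^ (-θ)) := by
      rw [htofReal, ENNReal.ofReal_rpow_of_pos hτpos]
    -- the real-number computation
    have hreal : τ ^ (-θ) * (H * τ ^ θ + τ * (M + L)) ≤ 2 * H + M := by
      have e0 : τ ^ (-θ) * τ ^ θ = 1 := by
        rw [← Real.rpow_add hτpos]; simp
      have e1 : τ ^ (-θ) * τ = τ ^ (1 - θ) := by
        nth_rewrite 2 [← Real.rpow_one τ]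
        rw [← Real.rpow_add hτpos]; ring_nf
      have e2 : τ ^ (1 - θ) * τ ^ (θ - 1) = 1 := by
        rw [← Real.rpow_add hτpos]; ring_nf; exact Real.rpow_zero τ
      have hs1 : τ ^ (1 - θ) ≤ 1 := Real.rpow_le_one hτpos.le hτ1 (by linarith)
      have hs0 : 0 ≤ τ ^ (1 - θ) := by positivity
      have expand : τ ^ (-θ) * (H * τ ^ θ + τ * (M + L)) = H + τ ^ (1 - θ) * M + H := by
        rw [hLdef]
        linear_combination H * e0 + M * e1 + H * (τ ^ (θ - 1)) * e1 + H * e2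
      have hsM : τ ^ (1 - θ) * M ≤ M := by
        calc τ ^ (1 - θ) * M ≤ 1 * M := mul_le_mul_of_nonneg_right hs1 hM0
          _ = M := one_mul M
      linarith
    calc t ^ (-θ) * Kfun t f
        ≤ t ^ (-θ) * (ENNReal.ofReal (H * τ ^ θ) + t * ENNReal.ofReal (M + L)) :=
          mul_le_mul' le_rfl hK
      _ = ENNReal.ofReal (τ ^ (-θ) * (H * τ ^ θ + τ * (M + L))) := by
          rw [htneg, htofReal, ← ENNReal.ofReal_mul hτpos.le,
            ← ENNReal.ofReal_add (by positivity) (by positivity),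
            ← ENNReal.ofReal_mul (by positivity)]
      _ ≤ ENNReal.ofReal (2 * H + M) := ENNReal.ofReal_le_ofReal hreal
      _ ≤ ENNReal.ofReal (2 * (M + H)) := ENNReal.ofReal_le_ofReal (by linarith)
      _ = 2 * ENNReal.ofReal (M + H) := by
          rw [ENNReal.ofReal_mul (by norm_num)]; norm_num
      _ = 2 * holderNorm θ f := by
          rw [hNorm_eq, ← ENNReal.ofReal_add hM0 hH0]
lemma supN_le_realInterp (θ : ℝ) (f : E → ℝ) : supN f ≤ realInterpInftyNorm θ f := by
  have h1 : supN f ≤ Kfun ((2:ℝ≥0∞) ^ (0:ℤ)) f := by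
    refine le_Kfun fun g h hfgh hg => ?_
    have : supN f ≤ supN g + supN h := by
      refine iSup_le fun x => ?_
      have : |f x| ≤ |g x| + |h x| := by rw [hfgh]; exact abs_add_le _ _
      calc ENNReal.ofReal |f x| ≤ ENNReal.ofReal (|g x| + |h x|) := ENNReal.ofReal_le_ofReal this
        _ = ENNReal.ofReal |g x| + ENNReal.ofReal |h x| := ENNReal.ofReal_add (abs_nonneg _) (abs_nonneg _)
        _ ≤ supN g + supN h := add_le_add (ofReal_abs_le_supN g x) (ofReal_abs_le_supN h x)
    refine this.trans (add_le_add_right ?_ _)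
    simp only [zpow_zero, one_mul]
    exact le_self_add
  have h2 := term_le_realInterp θ f 0
  simpa using le_trans (by simpa using h1) h2


end Helpers

/-- For any nonempty compact set `E ⊆ ℝ^d` and `θ ∈ (0,1)`, the real interpolation space
`(C(E), C^{0,1}(E))_{θ,∞}` equals the Hölder space `C^{0,θ}(E)` with equivalent norms:
the `(θ,∞)` interpolation norm and the `C^{0,θ}` norm are two-sidedly comparable on
continuous functions. -/

theorem stmt_2 {d : ℕ} (E : Set (EuclideanSpace ℝ (Fin d)))
    (hE : IsCompact E) (hne : E.Nonempty) (θ : ℝ) (hθ : θ ∈ Set.Ioo (0 : ℝ) 1) :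
    ∃ c C : ℝ≥0∞, 0 < c ∧ C < ⊤ ∧ ∀ f : E → ℝ, Continuous f →
      c * holderNorm θ f ≤ realInterpInftyNorm θ f ∧
      realInterpInftyNorm θ f ≤ C * holderNorm θ f := by
  obtain ⟨hθ0, hθ1⟩ := hθ
  have : Nonempty E := hne.to_subtype
  refine ⟨5⁻¹, 2, ?_, ?_, fun f hf => ?_⟩
  · simp
  · exact ENNReal.ofNat_lt_top
  constructor
  · have h1 : holderNorm θ f ≤ 5 * realInterpInftyNorm θ f := by
      calc holderNorm θ f = supN f + holderSemi θ f := rfl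
        _ ≤ realInterpInftyNorm θ f + 4 * realInterpInftyNorm θ f :=
            add_le_add (supN_le_realInterp θ f) (holderSemi_le_realInterp hθ0 hθ1 f)
        _ = 5 * realInterpInftyNorm θ f := by ring
    calc 5⁻¹ * holderNorm θ f ≤ 5⁻¹ * (5 * realInterpInftyNorm θ f) := mul_le_mul' le_rfl h1
      _ = (5⁻¹ * 5) * realInterpInftyNorm θ f := (mul_assoc _ _ _).symm
      _ = realInterpInftyNorm θ f := by
          rw [ENNReal.inv_mul_cancel (by norm_num) (by norm_num), one_mul]
  · exact realInterp_le_holderNorm hθ0 hθ1 f hf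

end
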